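/- Let A and B be disjoint finite sets, z ∈ [0,1], and for E ⊆ A ∪ B let x(E) = |E ∩ A|/|A| and y(E) = |E ∩ B|/|B|. Then u(E) = x(E) + z·(1 − x(E))·y(E) is a monotone submodular set function. -/

import Mathlib

open Finset

private lemma gadget_mono_aux (x x' y y' z : ℝ) (hx : x ≤ x') (hx0 : 0 ≤ x)
    (hy : y ≤ y') (hy0 : 0 ≤ y) (hy1 : y' ≤ 1) (hx1 : x ≤ 1)
    (hz0 : 0 ≤ z) (hz1 : z ≤ 1) :
    x + z * (1 - x) * y ≤ x' + z * (1 - x') * y' := by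
  have hzy : z * y' ≤ 1 := by nlinarith
  nlinarith [mul_nonneg (sub_nonneg.2 hx) (sub_nonneg.2 hzy),
    mul_nonneg (mul_nonneg hz0 (sub_nonneg.2 hx1)) (sub_nonneg.2 hy)]

private lemma gadget_subA_aux (x x' y y' d z : ℝ) (hd : 0 ≤ d) (hy : y ≤ y')
    (hz : 0 ≤ z) :
    ((x' + d) + z * (1 - (x' + d)) * y') - (x' + z * (1 - x') * y') ≤
    ((x + d) + z * (1 - (x + d)) * y) - (x + z * (1 - x) * y) := by
  have h := mul_le_mul_of_nonneg_left hy (mul_nonneg hz hd)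
  ring_nf
  nlinarith [h]

private lemma gadget_subB_aux (x x' y y' d z : ℝ) (hd : 0 ≤ d) (hx : x ≤ x')
    (hz : 0 ≤ z) :
    (x' + z * (1 - x') * (y' + d)) - (x' + z * (1 - x') * y') ≤
    (x + z * (1 - x) * (y + d)) - (x + z * (1 - x) * y) := by
  have h := mul_le_mul_of_nonneg_left (sub_le_sub_left hx 1) (mul_nonneg hz hd)
  nlinarith [h]

/-- The utility `u(E) = x(E) + z(1−x(E))y(E)` built from disjoint gadgets `A`, `B`
(where `x(E) = |E ∩ A|/|A|` and `y(E) = |E ∩ B|/|B|`) is monotone and submodular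
on subsets of `A ∪ B`. -/
theorem gadget_utility_monotone_submodular
    {γ : Type*} [DecidableEq γ]
    (A B : Finset γ) (hA : A.Nonempty) (hB : B.Nonempty) (hAB : Disjoint A B)
    (z : ℝ) (hz : z ∈ Set.Icc (0:ℝ) 1) :
    (∀ E E' : Finset γ, E ⊆ E' → E' ⊆ A ∪ B →
      (fun E : Finset γ => ((E ∩ A).card : ℝ) / A.card +
        z * (1 - ((E ∩ A).card : ℝ) / A.card) * (((E ∩ B).card : ℝ) / B.card)) E ≤
      (fun E : Finset γ => ((E ∩ A).card : ℝ) / A.card +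
        z * (1 - ((E ∩ A).card : ℝ) / A.card) * (((E ∩ B).card : ℝ) / B.card)) E') ∧
    (∀ (E E' : Finset γ) (t : γ), E ⊆ E' → E' ⊆ A ∪ B → t ∈ A ∪ B → t ∉ E' →
      (fun E : Finset γ => ((E ∩ A).card : ℝ) / A.card +
        z * (1 - ((E ∩ A).card : ℝ) / A.card) * (((E ∩ B).card : ℝ) / B.card)) (E' ∪ {t}) -
      (fun E : Finset γ => ((E ∩ A).card : ℝ) / A.card +
        z * (1 - ((E ∩ A).card : ℝ) / A.card) * (((E ∩ B).card : ℝ) / B.card)) E' ≤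
      (fun E : Finset γ => ((E ∩ A).card : ℝ) / A.card +
        z * (1 - ((E ∩ A).card : ℝ) / A.card) * (((E ∩ B).card : ℝ) / B.card)) (E ∪ {t}) -
      (fun E : Finset γ => ((E ∩ A).card : ℝ) / A.card +
        z * (1 - ((E ∩ A).card : ℝ) / A.card) * (((E ∩ B).card : ℝ) / B.card)) E) := by
  obtain ⟨hz0, hz1⟩ := hz
  have ha : (0:ℝ) < A.card := by exact_mod_cast hA.card_pos
  have hb : (0:ℝ) < B.card := by exact_mod_cast hB.card_pos
  have hx0 : ∀ E : Finset γ, (0:ℝ) ≤ ((E ∩ A).card : ℝ) / A.card := fun E =>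
    div_nonneg (Nat.cast_nonneg _) ha.le
  have hx1 : ∀ E : Finset γ, ((E ∩ A).card : ℝ) / A.card ≤ 1 := fun E => by
    rw [div_le_one ha]
    exact_mod_cast card_le_card (inter_subset_right)
  have hy0 : ∀ E : Finset γ, (0:ℝ) ≤ ((E ∩ B).card : ℝ) / B.card := fun E =>
    div_nonneg (Nat.cast_nonneg _) hb.le
  have hy1 : ∀ E : Finset γ, ((E ∩ B).card : ℝ) / B.card ≤ 1 := fun E => by
    rw [div_le_one hb]
    exact_mod_cast card_le_card (inter_subset_right)
  have hxmono : ∀ E E' : Finset γ, E ⊆ E' →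
      ((E ∩ A).card : ℝ) / A.card ≤ ((E' ∩ A).card : ℝ) / A.card := fun E E' h => by
    apply div_le_div_of_nonneg_right ?_ ha.le |>.trans_eq rfl
    exact_mod_cast card_le_card (inter_subset_inter h (Finset.Subset.refl A))
  have hymono : ∀ E E' : Finset γ, E ⊆ E' →
      ((E ∩ B).card : ℝ) / B.card ≤ ((E' ∩ B).card : ℝ) / B.card := fun E E' h => by
    apply div_le_div_of_nonneg_right ?_ hb.le |>.trans_eq rfl
    exact_mod_cast card_le_card (inter_subset_inter h (Finset.Subset.refl B))
  constructor
  · intro E E' hEE' _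
    exact gadget_mono_aux _ _ _ _ z (hxmono E E' hEE') (hx0 E) (hymono E E' hEE')
      (hy0 E) (hy1 E') (hx1 E) hz0 hz1
  · intro E E' t hEE' hE'AB htAB htE'
    have htE : t ∉ E := fun h => htE' (hEE' h)
    have hins : ∀ S : Finset γ, S ∪ {t} = insert t S := fun S => by
      rw [Finset.union_comm]; rw [Finset.insert_eq]
    rcases Finset.mem_union.1 htAB with htA | htB
    · have htB : t ∉ B := Finset.disjoint_left.1 hAB htA
      have cardA : ∀ S : Finset γ, t ∉ S →
          ((((S ∪ {t}) ∩ A).card : ℝ)) / A.card = ((S ∩ A).card : ℝ) / A.card + 1 / A.card :=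
        fun S htS => by
        rw [hins, Finset.insert_inter_of_mem htA,
          Finset.card_insert_of_notMem (fun h => htS (Finset.mem_inter.1 h).1)]
        push_cast
        rw [add_div]
      have cardB : ∀ S : Finset γ, ((S ∪ {t}) ∩ B) = S ∩ B := fun S => by
        rw [hins, Finset.insert_inter_of_notMem htB]
      simp only [cardA E htE, cardA E' htE', cardB E, cardB E']
      exact gadget_subA_aux _ _ _ _ _ z (by positivity) (hymono E E' hEE') hz0
    · have htA : t ∉ A := Finset.disjoint_right.1 hAB htB
      have cardB : ∀ S : Finset γ, t ∉ S →
          ((((S ∪ {t}) ∩ B).card : ℝ)) / B.card = ((S ∩ B).card : ℝ) / B.card + 1 / B.card :=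
        fun S htS => by
        rw [hins, Finset.insert_inter_of_mem htB,
          Finset.card_insert_of_notMem (fun h => htS (Finset.mem_inter.1 h).1)]
        push_cast
        rw [add_div]
      have cardA : ∀ S : Finset γ, ((S ∪ {t}) ∩ A) = S ∩ A := fun S => by
        rw [hins, Finset.insert_inter_of_notMem htA]
      simp only [cardB E htE, cardB E' htE', cardA E, cardA E']
      exact gadget_subB_aux _ _ _ _ _ z (by positivity) (hxmono E E' hEE') hz0
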